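/- Let y ∈ C²[x_{i-2}, x_i] with mesh steps h_{i-1} = x_{i-1} - x_{i-2}, h_i = x_i - x_{i-1}. Then |D⁻(y' - D⁻y)(x_i)| ≤ C (1 + h_{i-1}/h_i) sup_{[x_{i-2},x_i]} |y''| for an absolute constant C, where D⁻ is the backward difference. Moreover, if h_{i-1} = h_i and y ∈ C³, then |D⁻(y' - D⁻y)(x_i)| ≤ C h_i sup_{[x_{i-2},x_i]} |y'''|. -/

import Mathlib

open Set

/-- First-order mean value estimate: the backward difference quotient differs from the
derivative at the right endpoint by at most `M * (b - a)` when the second derivative is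
bounded by `M`. -/
private lemma helperA {y g g2 : ℝ → ℝ} {s : Set ℝ} {a b : ℝ} (hab : a < b)
    (hsub : Set.Icc a b ⊆ s) (hconv : Convex ℝ s)
    (hcont : ContinuousOn y s)
    (hgy : ∀ t ∈ s, HasDerivWithinAt y (g t) s t)
    (hgg : ∀ t ∈ s, HasDerivWithinAt g (g2 t) s t)
    {M : ℝ} (hM : ∀ t ∈ s, |g2 t| ≤ M) :
    |g b - (y b - y a) / (b - a)| ≤ M * (b - a) := by
  have hbmem : b ∈ Set.Icc a b := ⟨hab.le, le_rfl⟩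
  have hM0 : 0 ≤ M := le_trans (abs_nonneg _) (hM b (hsub hbmem))
  have hder : ∀ x ∈ Set.Ioo a b, HasDerivAt y (g x) x := by
    intro x hx
    have hxs : s ∈ nhds x :=
      Filter.mem_of_superset (Icc_mem_nhds hx.1 hx.2) hsub
    exact (hgy x (hsub (Set.Ioo_subset_Icc_self hx))).hasDerivAt hxs
  obtain ⟨c, hc, hslope⟩ := exists_hasDerivAt_eq_slope y g hab (hcont.mono hsub) hder
  rw [← hslope]
  have h1 := hconv.norm_image_sub_le_of_norm_hasDerivWithin_le hgg hM
    (hsub (Set.Ioo_subset_Icc_self hc)) (hsub hbmem)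
  rw [Real.norm_eq_abs, Real.norm_eq_abs] at h1
  refine h1.trans (mul_le_mul_of_nonneg_left ?_ hM0)
  rw [abs_of_nonneg (by linarith [hc.2] : (0:ℝ) ≤ b - c)]
  linarith [hc.1]

/-- Second-order mean value estimate: the truncation error of the backward difference
quotient equals `(b-a)/2 * y''(b)` up to an error of size `M3 * (b-a)^2` when the third
derivative is bounded by `M3`. -/
private lemma helperB {y g g2 g3 : ℝ → ℝ} {s : Set ℝ} {a b : ℝ} (hab : a < b)
    (hsub : Set.Icc a b ⊆ s)
    (hgy : ∀ t ∈ s, HasDerivWithinAt y (g t) s t)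
    (hgg : ∀ t ∈ s, HasDerivWithinAt g (g2 t) s t)
    (hg3 : ∀ t ∈ s, HasDerivWithinAt g2 (g3 t) s t)
    {M3 : ℝ} (hM3 : ∀ t ∈ s, |g3 t| ≤ M3) :
    |(g b - (y b - y a) / (b - a)) - (b - a) / 2 * g2 b| ≤ M3 * (b - a) ^ 2 := by
  have hbmem : b ∈ Set.Icc a b := ⟨hab.le, le_rfl⟩
  have hamem : a ∈ Set.Icc a b := ⟨le_rfl, hab.le⟩
  have hM0 : 0 ≤ M3 := le_trans (abs_nonneg _) (hM3 b (hsub hbmem))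
  have hba : (0:ℝ) < b - a := sub_pos.2 hab
  have hIcc : Convex ℝ (Set.Icc a b) := convex_Icc a b
  have hgy' : ∀ t ∈ Set.Icc a b, HasDerivWithinAt y (g t) (Set.Icc a b) t :=
    fun t ht => (hgy t (hsub ht)).mono hsub
  have hgg' : ∀ t ∈ Set.Icc a b, HasDerivWithinAt g (g2 t) (Set.Icc a b) t :=
    fun t ht => (hgg t (hsub ht)).mono hsub
  have hg3' : ∀ t ∈ Set.Icc a b, HasDerivWithinAt g2 (g3 t) (Set.Icc a b) t :=
    fun t ht => (hg3 t (hsub ht)).mono hsub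
  -- bound |g2 t - g2 b| ≤ M3 * (b - a) on [a,b]
  have hg2bd : ∀ t ∈ Set.Icc a b, |g2 t - g2 b| ≤ M3 * (b - a) := by
    intro t ht
    have h1 := hIcc.norm_image_sub_le_of_norm_hasDerivWithin_le hg3'
      (fun x hx => hM3 x (hsub hx)) hbmem ht
    rw [Real.norm_eq_abs, Real.norm_eq_abs] at h1
    refine h1.trans (mul_le_mul_of_nonneg_left ?_ hM0)
    rw [abs_of_nonpos (by linarith [ht.2] : t - b ≤ 0)]
    linarith [ht.1]
  -- ψ t = g t - g b - g2 b * (t - b)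
  set ψ : ℝ → ℝ := fun t => g t - g b - g2 b * (t - b) with hψdef
  have hψ' : ∀ t ∈ Set.Icc a b, HasDerivWithinAt ψ (g2 t - g2 b) (Set.Icc a b) t := by
    intro t ht
    have h2 : HasDerivWithinAt (fun t : ℝ => g2 b * (t - b)) (g2 b) (Set.Icc a b) t := by
      simpa using ((hasDerivWithinAt_id t (Set.Icc a b)).sub_const b).const_mul (g2 b)
    exact ((hgg' t ht).sub_const (g b)).sub h2
  have hψbd : ∀ t ∈ Set.Icc a b, |ψ t| ≤ M3 * (b - a) * (b - a) := by
    intro t ht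
    have h1 := hIcc.norm_image_sub_le_of_norm_hasDerivWithin_le hψ' hg2bd hbmem ht
    have hψb : ψ b = 0 := by simp [hψdef]
    rw [Real.norm_eq_abs, Real.norm_eq_abs, hψb, sub_zero] at h1
    refine h1.trans (mul_le_mul_of_nonneg_left ?_ (mul_nonneg hM0 hba.le))
    rw [abs_of_nonpos (by linarith [ht.2] : t - b ≤ 0)]
    linarith [ht.1]
  -- F t = y t - y b - g b * (t - b) - g2 b / 2 * (t - b)^2
  set F : ℝ → ℝ := fun t => y t - y b - g b * (t - b) - g2 b / 2 * (t - b) ^ 2 with hFdef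
  have hF' : ∀ t ∈ Set.Icc a b, HasDerivWithinAt F (ψ t) (Set.Icc a b) t := by
    intro t ht
    have hid := (hasDerivWithinAt_id t (Set.Icc a b)).sub_const b
    have h2 : HasDerivWithinAt (fun t : ℝ => g b * (t - b)) (g b) (Set.Icc a b) t := by
      simpa using hid.const_mul (g b)
    have h3 : HasDerivWithinAt (fun t : ℝ => g2 b / 2 * (t - b) ^ 2)
        (g2 b * (t - b)) (Set.Icc a b) t := by
      have h4 := (hid.pow 2).const_mul (g2 b / 2)
      refine h4.congr_deriv ?_
      simp
      ring
    have h5 := (((hgy' t ht).sub_const (y b)).sub h2).sub h3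
    exact h5
  have hFa : |F a| ≤ M3 * (b - a) * (b - a) * (b - a) := by
    have h1 := hIcc.norm_image_sub_le_of_norm_hasDerivWithin_le hF' hψbd hbmem hamem
    have hFb : F b = 0 := by simp [hFdef]
    rw [Real.norm_eq_abs, Real.norm_eq_abs, hFb, sub_zero] at h1
    refine h1.trans ?_
    rw [abs_of_nonpos (by linarith : a - b ≤ 0)]
    nlinarith [mul_nonneg hM0 hba.le]
  have hkey : (g b - (y b - y a) / (b - a)) - (b - a) / 2 * g2 b = F a / (b - a) := by
    have hFa' : F a = y a - y b - g b * (a - b) - g2 b / 2 * (a - b) ^ 2 := rfl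
    rw [hFa']
    field_simp
    ring
  rw [hkey, abs_div, abs_of_pos hba, div_le_iff₀ hba]
  calc |F a| ≤ M3 * (b - a) * (b - a) * (b - a) := hFa
    _ = M3 * (b - a) ^ 2 * (b - a) := by ring

/-- The second iterated derivative is the derivative (within) of the first derivative. -/
private lemma deriv_chain2 {y : ℝ → ℝ} {p r : ℝ} (hpr : p < r)
    (hy : ContDiffOn ℝ 2 y (Set.Icc p r)) :
    ∀ t ∈ Set.Icc p r, HasDerivWithinAt (derivWithin y (Set.Icc p r))
      (iteratedDerivWithin 2 y (Set.Icc p r) t) (Set.Icc p r) t := by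
  intro t ht
  have hs : UniqueDiffOn ℝ (Set.Icc p r) := uniqueDiffOn_Icc hpr
  have hd1 : DifferentiableOn ℝ (iteratedDerivWithin 1 y (Set.Icc p r)) (Set.Icc p r) :=
    hy.differentiableOn_iteratedDerivWithin (by norm_num) hs
  have h1 := (hd1 t ht).hasDerivWithinAt
  rw [← iteratedDerivWithin_succ] at h1
  exact h1.congr (fun x hx => (congrFun iteratedDerivWithin_one x).symm)
    (congrFun iteratedDerivWithin_one t).symm

/-- The third iterated derivative is the derivative (within) of the second. -/
private lemma deriv_chain3 {y : ℝ → ℝ} {p r : ℝ} (hpr : p < r)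
    (hy : ContDiffOn ℝ 3 y (Set.Icc p r)) :
    ∀ t ∈ Set.Icc p r, HasDerivWithinAt (iteratedDerivWithin 2 y (Set.Icc p r))
      (iteratedDerivWithin 3 y (Set.Icc p r) t) (Set.Icc p r) t := by
  intro t ht
  have hs : UniqueDiffOn ℝ (Set.Icc p r) := uniqueDiffOn_Icc hpr
  have hd2 : DifferentiableOn ℝ (iteratedDerivWithin 2 y (Set.Icc p r)) (Set.Icc p r) :=
    hy.differentiableOn_iteratedDerivWithin (by norm_num) hs
  have h1 := (hd2 t ht).hasDerivWithinAt
  have h2 : iteratedDerivWithin 3 y (Set.Icc p r) t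
      = derivWithin (iteratedDerivWithin 2 y (Set.Icc p r)) (Set.Icc p r) t :=
    congrFun (iteratedDerivWithin_succ (n := 2)) t
  rwa [← h2] at h1

/-- Consistency estimate for the backward difference of the flux truncation error.
Nodes `p < q < r` with `h_{i-1} = q - p`, `h_i = r - q`;
`E(x_i) = y'(x_i) - D⁻y(x_i)` and the bound is on `D⁻E(x_i) = (E(r)-E(q))/h_i`. -/
theorem Dminus_flux_truncation :
    ∃ C : ℝ, 0 < C ∧
    ∀ (y : ℝ → ℝ) (p q r : ℝ), p < q → q < r →
      (ContDiffOn ℝ 2 y (Set.Icc p r) →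
        ∀ M : ℝ, (∀ s ∈ Set.Icc p r, |iteratedDerivWithin 2 y (Set.Icc p r) s| ≤ M) →
          |((derivWithin y (Set.Icc p r) r - (y r - y q) / (r - q))
              - (derivWithin y (Set.Icc p r) q - (y q - y p) / (q - p))) / (r - q)|
            ≤ C * (1 + (q - p) / (r - q)) * M) ∧
      (q - p = r - q → ContDiffOn ℝ 3 y (Set.Icc p r) →
        ∀ M3 : ℝ, (∀ s ∈ Set.Icc p r, |iteratedDerivWithin 3 y (Set.Icc p r) s| ≤ M3) →
          |((derivWithin y (Set.Icc p r) r - (y r - y q) / (r - q))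
              - (derivWithin y (Set.Icc p r) q - (y q - y p) / (q - p))) / (r - q)|
            ≤ C * (r - q) * M3) := by
  refine ⟨4, by norm_num, fun y p q r hpq hqr => ?_⟩
  have hpr : p < r := hpq.trans hqr
  have hconv : Convex ℝ (Set.Icc p r) := convex_Icc p r
  have hrq : (0:ℝ) < r - q := sub_pos.2 hqr
  have hqp : (0:ℝ) < q - p := sub_pos.2 hpq
  have hsubr : Set.Icc q r ⊆ Set.Icc p r := Set.Icc_subset_Icc hpq.le le_rfl
  have hsubl : Set.Icc p q ⊆ Set.Icc p r := Set.Icc_subset_Icc le_rfl hqr.le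
  constructor
  · -- first-order estimate
    intro hy M hM
    have hgy : ∀ t ∈ Set.Icc p r,
        HasDerivWithinAt y (derivWithin y (Set.Icc p r) t) (Set.Icc p r) t :=
      fun t ht => ((hy.differentiableOn (by norm_num)) t ht).hasDerivWithinAt
    have hgg := deriv_chain2 hpr hy
    have hM0 : 0 ≤ M :=
      le_trans (abs_nonneg _) (hM r (Set.right_mem_Icc.2 hpr.le))
    have hEr := helperA hqr hsubr hconv hy.continuousOn hgy hgg hM
    have hEq := helperA hpq hsubl hconv hy.continuousOn hgy hgg hM
    rw [abs_div, abs_of_pos hrq, div_le_iff₀ hrq]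
    have h2 : 4 * (1 + (q - p) / (r - q)) * M * (r - q)
        = 4 * M * ((r - q) + (q - p)) := by field_simp
    rw [h2]
    refine le_trans (abs_sub _ _) (le_trans (add_le_add hEr hEq) ?_)
    nlinarith [mul_nonneg hM0 hrq.le, mul_nonneg hM0 hqp.le]
  · -- second-order estimate for a uniform mesh
    intro heq hy3 M3 hM3
    have hgy : ∀ t ∈ Set.Icc p r,
        HasDerivWithinAt y (derivWithin y (Set.Icc p r) t) (Set.Icc p r) t :=
      fun t ht => ((hy3.differentiableOn (by norm_num)) t ht).hasDerivWithinAt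
    have hgg := deriv_chain2 hpr (hy3.of_le (by norm_num))
    have hg3 := deriv_chain3 hpr hy3
    have hM0 : 0 ≤ M3 :=
      le_trans (abs_nonneg _) (hM3 r (Set.right_mem_Icc.2 hpr.le))
    have hEr := helperB hqr hsubr hgy hgg hg3 hM3
    have hEq := helperB hpq hsubl hgy hgg hg3 hM3
    have hg2d : |iteratedDerivWithin 2 y (Set.Icc p r) r
        - iteratedDerivWithin 2 y (Set.Icc p r) q| ≤ M3 * (r - q) := by
      have h1 := hconv.norm_image_sub_le_of_norm_hasDerivWithin_le hg3 hM3
        (Set.mem_Icc.2 ⟨hpq.le, hqr.le⟩) (Set.right_mem_Icc.2 hpr.le)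
      rw [Real.norm_eq_abs, Real.norm_eq_abs, abs_of_pos hrq] at h1
      exact h1
    rw [abs_div, abs_of_pos hrq, div_le_iff₀ hrq]
    have hiden : (derivWithin y (Set.Icc p r) r - (y r - y q) / (r - q))
          - (derivWithin y (Set.Icc p r) q - (y q - y p) / (q - p))
        = ((derivWithin y (Set.Icc p r) r - (y r - y q) / (r - q))
              - (r - q) / 2 * iteratedDerivWithin 2 y (Set.Icc p r) r)
          - ((derivWithin y (Set.Icc p r) q - (y q - y p) / (q - p))
              - (q - p) / 2 * iteratedDerivWithin 2 y (Set.Icc p r) q)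
          + (r - q) / 2 * (iteratedDerivWithin 2 y (Set.Icc p r) r
              - iteratedDerivWithin 2 y (Set.Icc p r) q) := by
      linear_combination (-(iteratedDerivWithin 2 y (Set.Icc p r) q) / 2) * heq
    rw [hiden]
    have h7 : (q - p) ^ 2 = (r - q) ^ 2 := by rw [heq]
    have hc3 : |(r - q) / 2 * (iteratedDerivWithin 2 y (Set.Icc p r) r
        - iteratedDerivWithin 2 y (Set.Icc p r) q)| ≤ (r - q) / 2 * (M3 * (r - q)) := by
      rw [abs_mul, abs_of_pos (by positivity : (0:ℝ) < (r - q) / 2)]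
      exact mul_le_mul_of_nonneg_left hg2d (by positivity)
    refine le_trans (abs_add_le _ _) ?_
    refine le_trans (add_le_add ((abs_sub _ _).trans (add_le_add hEr hEq)) hc3) ?_
    rw [h7]
    nlinarith [mul_nonneg hM0 (mul_pos hrq hrq).le]
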